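/- Define L^{(q,λ)}(x,a;θ) := e^{θx}( W̄^{(q)}(x−a;θ) − W̄^{(q+λ)}(x;θ) + λ ∫_0^{x−a} W^{(q)}(y) e^{−θy} W̄^{(q+λ)}(x−y;θ) dy ), where W̄^{(q)}(x;θ) := ∫_0^x e^{−θz} W^{(q)}(z) dz. Then for every θ with ψ(θ) ≠ q+λ and all a, x ∈ ℝ: L^{(q,λ)}(x,a;θ) = ( e^{θa} Z^{(q)}(x−a;θ) − 𝒵_a^{(q,λ)}(x;θ) ) / ( q+λ−ψ(θ) ), where 𝒵_a^{(q,λ)}(x;θ) := Z^{(q+λ)}(x;θ) − λ ∫_a^x W^{(q)}(x−y) Z^{(q+λ)}(y;θ) dy. -/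

import Mathlib

open MeasureTheory

/-- `W̄^{(q)}(x;θ) = ∫_0^x e^{−θz} W(z) dz`. -/
noncomputable def Wbar (W : ℝ → ℝ) (θ x : ℝ) : ℝ :=
  ∫ z in (0 : ℝ)..x, Real.exp (-θ * z) * W z

/-- `Z^{(q)}(x;θ) = e^{θx}(1 + (q − ψ(θ)) W̄^{(q)}(x;θ))`. -/
noncomputable def Zfun (ψ : ℝ → ℝ) (q : ℝ) (W : ℝ → ℝ) (θ x : ℝ) : ℝ :=
  Real.exp (θ * x) * (1 + (q - ψ θ) * Wbar W θ x)

/-- `L^{(q,λ)}(x,a;θ)` built from the `q`-scale function `Wq` and the `(q+λ)`-scale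
function `Wql`. -/
noncomputable def Lfun (Wq Wql : ℝ → ℝ) (lam θ x a : ℝ) : ℝ :=
  Real.exp (θ * x) *
    (Wbar Wq θ (x - a) - Wbar Wql θ x
      + lam * ∫ y in (0 : ℝ)..(x - a), Wq y * Real.exp (-θ * y) * Wbar Wql θ (x - y))

/-- `𝒵_a^{(q,λ)}(x;θ) = Z^{(q+λ)}(x;θ) − λ ∫_a^x W^{(q)}(x−y) Z^{(q+λ)}(y;θ) dy`. -/
noncomputable def Zcal (ψ : ℝ → ℝ) (q lam : ℝ) (Wq Wql : ℝ → ℝ) (θ a x : ℝ) : ℝ :=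
  Zfun ψ (q + lam) Wql θ x - lam * ∫ y in a..x, Wq (x - y) * Zfun ψ (q + lam) Wql θ y

/-- A function vanishing on negatives and continuous on `[0,∞)` is bounded on `(-∞, M]`. -/
lemma bdd_of (f : ℝ → ℝ) (hneg : ∀ x < (0 : ℝ), f x = 0)
    (hc : ContinuousOn f (Set.Ici 0)) (M : ℝ) :
    ∃ C, 0 ≤ C ∧ ∀ z, z ≤ M → |f z| ≤ C := by
  obtain ⟨C, hC⟩ := (isCompact_Icc (a := (0 : ℝ)) (b := M)).exists_bound_of_continuousOn
    (hc.mono Set.Icc_subset_Ici_self)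
  refine ⟨max C 0, le_max_right _ _, fun z hz => ?_⟩
  rcases lt_or_ge z 0 with h | h
  · simp [hneg z h]
  · exact le_trans (by simpa [Real.norm_eq_abs] using hC z ⟨h, hz⟩) (le_max_left _ _)

/-- A measurable function bounded on `uIcc a b` times a continuous function is interval
integrable. -/
lemma intble_mul (F g : ℝ → ℝ) (hFm : Measurable F) (C : ℝ)
    (hC : ∀ y ∈ Set.uIcc a b, |F y| ≤ C) (hg : Continuous g) :
    IntervalIntegrable (fun y => F y * g y) volume a b := by
  obtain ⟨D, hD⟩ := isCompact_uIcc.exists_bound_of_continuousOn hg.continuousOn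
  have hC0 : 0 ≤ C := le_trans (abs_nonneg _) (hC a Set.left_mem_uIcc)
  rw [intervalIntegrable_iff]
  have hconst : IntegrableOn (fun _ : ℝ => C * D) (Set.uIoc a b) volume :=
    intervalIntegrable_iff.mp intervalIntegrable_const
  refine Integrable.mono' hconst
    ((hFm.mul hg.measurable).aestronglyMeasurable) ?_
  filter_upwards [ae_restrict_mem measurableSet_uIoc] with y hy
  have hy' : y ∈ Set.uIcc a b := Set.uIoc_subset_uIcc hy
  calc ‖F y * g y‖ = |F y| * |g y| := by rw [norm_mul, Real.norm_eq_abs, Real.norm_eq_abs]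
    _ ≤ C * D := mul_le_mul (hC y hy') (by simpa [Real.norm_eq_abs] using hD y hy')
        (abs_nonneg _) hC0

lemma intble_shift (f : ℝ → ℝ) (hneg : ∀ x < (0 : ℝ), f x = 0)
    (hc : ContinuousOn f (Set.Ici 0)) (hm : Measurable f)
    (g : ℝ → ℝ) (hg : Continuous g) (x a b : ℝ) :
    IntervalIntegrable (fun y => f (x - y) * g y) volume a b := by
  obtain ⟨C, _, hC⟩ := bdd_of f hneg hc (x - min a b)
  refine intble_mul (fun y => f (x - y)) g
    (hm.comp (measurable_const.sub measurable_id)) C (fun y hy => ?_) hg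
  have h1 : min a b ≤ y := hy.1
  exact hC _ (by linarith)

lemma wbar_cont (W : ℝ → ℝ) (hneg : ∀ x < (0 : ℝ), W x = 0)
    (hc : ContinuousOn W (Set.Ici 0)) (hm : Measurable W) (θ : ℝ) :
    Continuous (Wbar W θ) := by
  apply intervalIntegral.continuous_primitive
  intro a b
  have : IntervalIntegrable (fun z => W z * Real.exp (-θ * z)) volume a b := by
    obtain ⟨C, _, hC⟩ := bdd_of W hneg hc (max a b)
    exact intble_mul W _ hm C (fun y hy => hC _ hy.2) (by continuity)
  exact this.congr (fun z _ => mul_comm _ _)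

/-- Lemma 4.1 of the paper.  For every `θ` with `ψ θ ≠ q + lam` and all
`a, x ∈ ℝ`:
`L^{(q,λ)}(x,a;θ) = (e^{θa} Z^{(q)}(x−a;θ) − 𝒵_a^{(q,λ)}(x;θ)) / (q + λ − ψ(θ))`. -/
theorem stmt7
    (ψ : ℝ → ℝ) (q lam : ℝ) (hq : 0 ≤ q) (hlam : 0 < lam)
    (Wq Wql : ℝ → ℝ)
    (hWqneg : ∀ x < (0 : ℝ), Wq x = 0) (hWqlneg : ∀ x < (0 : ℝ), Wql x = 0)
    (hWqcont : ContinuousOn Wq (Set.Ici 0)) (hWqlcont : ContinuousOn Wql (Set.Ici 0))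
    (hWqmeas : Measurable Wq) (hWqlmeas : Measurable Wql)
    (θ : ℝ) (hθ : ψ θ ≠ q + lam) :
    ∀ a x : ℝ,
      Lfun Wq Wql lam θ x a
        = (Real.exp (θ * a) * Zfun ψ q Wq θ (x - a) - Zcal ψ q lam Wq Wql θ a x)
            / (q + lam - ψ θ) := by
  intro a x
  have hc : q + lam - ψ θ ≠ 0 := sub_ne_zero.mpr hθ.symm
  rw [eq_div_iff hc]
  -- integrability of the two pieces
  have h1 : IntervalIntegrable (fun y => Wq (x - y) * Real.exp (θ * y)) volume a x :=
    intble_shift Wq hWqneg hWqcont hWqmeas _ (by continuity) x a x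
  have h2 : IntervalIntegrable
      (fun y => Wq (x - y) * (Real.exp (θ * y) * Wbar Wql θ y)) volume a x :=
    intble_shift Wq hWqneg hWqcont hWqmeas _
      ((Real.continuous_exp.comp (continuous_const.mul continuous_id)).mul
        (wbar_cont Wql hWqlneg hWqlcont hWqlmeas θ)) x a x
  -- split the integral of Wq(x-y) * Z^{(q+λ)}(y)
  have hsplit : (∫ y in a..x, Wq (x - y) * Zfun ψ (q + lam) Wql θ y)
      = (∫ y in a..x, Wq (x - y) * Real.exp (θ * y))
        + (q + lam - ψ θ) *
          ∫ y in a..x, Wq (x - y) * (Real.exp (θ * y) * Wbar Wql θ y) := by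
    rw [← intervalIntegral.integral_const_mul, ← intervalIntegral.integral_add h1
      (h2.const_mul _)]
    apply intervalIntegral.integral_congr
    intro y _
    simp only [Zfun]
    ring
  -- first substitution identity
  have hI1 : (∫ y in a..x, Wq (x - y) * Real.exp (θ * y))
      = Real.exp (θ * x) * Wbar Wq θ (x - a) := by
    calc (∫ y in a..x, Wq (x - y) * Real.exp (θ * y))
        = ∫ y in a..x, (fun z => Wq z * Real.exp (θ * x) * Real.exp (-θ * z)) (x - y) := by
          apply intervalIntegral.integral_congr
          intro y _
          simp only
          rw [mul_assoc, ← Real.exp_add]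
          ring_nf
      _ = ∫ z in x - x..x - a, Wq z * Real.exp (θ * x) * Real.exp (-θ * z) :=
          intervalIntegral.integral_comp_sub_left
            (fun z => Wq z * Real.exp (θ * x) * Real.exp (-θ * z)) x
      _ = Real.exp (θ * x) * Wbar Wq θ (x - a) := by
          rw [sub_self, Wbar, ← intervalIntegral.integral_const_mul]
          apply intervalIntegral.integral_congr
          intro z _
          ring
  -- second substitution identity
  have hI2 : (∫ y in a..x, Wq (x - y) * (Real.exp (θ * y) * Wbar Wql θ y))
      = Real.exp (θ * x) *
        ∫ z in (0 : ℝ)..(x - a), Wq z * Real.exp (-θ * z) * Wbar Wql θ (x - z) := by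
    calc (∫ y in a..x, Wq (x - y) * (Real.exp (θ * y) * Wbar Wql θ y))
        = ∫ y in a..x, (fun z =>
            Real.exp (θ * x) * (Wq z * Real.exp (-θ * z) * Wbar Wql θ (x - z))) (x - y) := by
          apply intervalIntegral.integral_congr
          intro y _
          simp only
          rw [show x - (x - y) = y by ring]
          have he : Real.exp (θ * y) = Real.exp (θ * x) * Real.exp (-θ * (x - y)) := by
            rw [← Real.exp_add]; ring_nf
          rw [he]; ring
      _ = ∫ z in x - x..x - a,
            Real.exp (θ * x) * (Wq z * Real.exp (-θ * z) * Wbar Wql θ (x - z)) :=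
          intervalIntegral.integral_comp_sub_left
            (fun z => Real.exp (θ * x) * (Wq z * Real.exp (-θ * z) * Wbar Wql θ (x - z))) x
      _ = Real.exp (θ * x) *
            ∫ z in (0 : ℝ)..(x - a), Wq z * Real.exp (-θ * z) * Wbar Wql θ (x - z) := by
          rw [sub_self, intervalIntegral.integral_const_mul]
  simp only [Lfun, Zcal]
  rw [hsplit, hI1, hI2]
  simp only [Zfun]
  have he : Real.exp (θ * a) * Real.exp (θ * (x - a)) = Real.exp (θ * x) := by
    rw [← Real.exp_add]; congr 1; ring
  linear_combination (-1 - (q - ψ θ) * Wbar Wq θ (x - a)) * he
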